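/- Let ω ∈ {0,1}^E be a configuration on the box Λ satisfying {T ⇸ B}, and let C be an open cluster of ω not touching ∂Λ whose outer edge boundary ∂_e C contains no pivotal edge for {T ⇸ B}, and suppose every cut intersects ∂_e C. Then there exists a subset A ⊆ ∂_e C with |A| ≥ |∂_e C|/2 and a cut disjoint from A. -/

import Mathlib

open scoped BigOperators
open scoped Classical

noncomputable section

namespace IsingInterface

/-- Embedding of lattice points of `ℤ^d` into Euclidean space. -/
def toE (d : ℕ) (x : Fin d → ℤ) : EuclideanSpace ℝ (Fin d) := WithLp.toLp 2 (fun i => (x i : ℝ))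

/-- Two lattice points are adjacent in `𝕃^d` when they are at Euclidean distance `1`. -/
def latticeAdj (d : ℕ) (x y : Fin d → ℤ) : Prop := dist (toE d x) (toE d y) = 1

/-- `e` is an edge of the lattice `𝕃^d`. -/
def IsLatticeEdge (d : ℕ) (e : Sym2 (Fin d → ℤ)) : Prop :=
  ∃ x y, e = s(x, y) ∧ latticeAdj d x y

/-- The centre of the unit segment associated to an edge. -/
def edgeMid (d : ℕ) (e : Sym2 (Fin d → ℤ)) : EuclideanSpace ℝ (Fin d) :=
  Sym2.lift ⟨fun x y => midpoint ℝ (toE d x) (toE d y), fun _ _ => midpoint_comm _ _⟩ e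

/-- Two edges are `*`-neighbours when the centres of their unit segments are at
`ℓ^∞` distance at most `1` (and they are distinct). -/
def starAdj (d : ℕ) (e f : Sym2 (Fin d → ℤ)) : Prop :=
  e ≠ f ∧ ∀ i, |edgeMid d e i - edgeMid d f i| ≤ 1

/-- A reference edge of the lattice. -/
def refEdge (d : ℕ) : Sym2 (Fin d → ℤ) :=
  s(fun _ => 0, fun j => if (j : ℕ) = 0 then 1 else 0)

/-- `α(d)`: the number of `*`-neighbours of an edge of `𝕃^d`. -/
def alphaStar (d : ℕ) : ℕ :=
  Nat.card {f : Sym2 (Fin d → ℤ) // IsLatticeEdge d f ∧ starAdj d (refEdge d) f}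

/-- The closed unit segment associated to an edge, as a subset of Euclidean space. -/
def edgeRegion (d : ℕ) (e : Sym2 (Fin d → ℤ)) : Set (EuclideanSpace ℝ (Fin d)) :=
  {pt | ∃ x y, e = s(x, y) ∧ pt ∈ segment ℝ (toE d x) (toE d y)}

/-- The Euclidean distance between the sets `A` and `B` is at least `r`. -/
def distGE (d : ℕ) (A B : Set (EuclideanSpace ℝ (Fin d))) (r : ℝ) : Prop :=
  ∀ pt ∈ A, ∀ qt ∈ B, r ≤ dist pt qt

/-- The `r`-neighbourhood `𝒱(A, r)` of a set `A`. -/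
def nbhd (d : ℕ) (A : Set (EuclideanSpace ℝ (Fin d))) (r : ℝ) :
    Set (EuclideanSpace ℝ (Fin d)) := {pt | ∃ a ∈ A, dist pt a ≤ r}

/-- The `i`-th coordinate unit vector of `ℤ^d`. -/
def unitZ (d : ℕ) (i : Fin d) : Fin d → ℤ := fun j => if j = i then 1 else 0

/-- A box `Λ`: the finite subgraph of `𝕃^d` whose vertices lie in a `d`-dimensional cube
centred at the origin, not necessarily parallel to the directions of the lattice.
It is described by a rotation of `ℝ^d` (a linear isometry), the half side-length of the
cube, and the direction (`axis`) of the hyperplane through the origin which is parallel to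
a face of the cube and splits the box into the two halves determining the sides `T` and
`B`.  The (always satisfied) field `finite'` records that the box is finite. -/
structure Box (d : ℕ) where
  rot : EuclideanSpace ℝ (Fin d) ≃ₗᵢ[ℝ] EuclideanSpace ℝ (Fin d)
  halfside : ℝ
  halfside_pos : 0 < halfside
  axis : Fin d
  finite' : Set.Finite {x : Fin d → ℤ | ∀ i, |rot.symm (toE d x) i| ≤ halfside}

namespace Box

variable {d : ℕ} (Λ : Box d)

/-- The region of `ℝ^d` occupied by the cube defining the box. -/
def region : Set (EuclideanSpace ℝ (Fin d)) :=
  {p | ∀ i, |Λ.rot.symm p i| ≤ Λ.halfside}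

/-- The set of vertices of the box. -/
def Vset : Set (Fin d → ℤ) := {x | toE d x ∈ Λ.region}

lemma finite_Vset : Λ.Vset.Finite := Λ.finite'

/-- The vertices of the box, as a finset. -/
def Vfinset : Finset (Fin d → ℤ) := Λ.finite_Vset.toFinset

/-- `|Λ|`: the number of vertices of the box. -/
def size : ℝ := (Λ.Vfinset.card : ℝ)

/-- The boundary `∂Λ` of the box: vertices having a lattice neighbour outside the box. -/
def bdry : Set (Fin d → ℤ) :=
  {x | x ∈ Λ.Vset ∧ ∃ y, latticeAdj d x y ∧ y ∉ Λ.Vset}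

/-- The side `T` of `∂Λ`: boundary vertices lying strictly in the upper half box. -/
def Tside : Set (Fin d → ℤ) :=
  {x | x ∈ Λ.bdry ∧ 0 < Λ.rot.symm (toE d x) Λ.axis}

/-- The side `B` of `∂Λ`: boundary vertices lying strictly in the lower half box. -/
def Bside : Set (Fin d → ℤ) :=
  {x | x ∈ Λ.bdry ∧ Λ.rot.symm (toE d x) Λ.axis < 0}

/-- The set of edges of the box. -/
def Eset : Set (Sym2 (Fin d → ℤ)) :=
  {e | ∃ x y, e = s(x, y) ∧ latticeAdj d x y ∧ x ∈ Λ.Vset ∧ y ∈ Λ.Vset}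

lemma finite_Eset : Λ.Eset.Finite := by
  apply Set.Finite.subset ((Λ.finite_Vset.prod Λ.finite_Vset).image (fun p => s(p.1, p.2)))
  rintro e ⟨x, y, rfl, _, hx, hy⟩
  exact ⟨(x, y), ⟨hx, hy⟩, rfl⟩

/-- The edges of the box, as a finset. -/
def Efinset : Finset (Sym2 (Fin d → ℤ)) := Λ.finite_Eset.toFinset

/-- The type of edges of the box. -/
abbrev Edge : Type := {e : Sym2 (Fin d → ℤ) // e ∈ Λ.Efinset}

/-- A percolation configuration on the box. -/
abbrev Config : Type := Λ.Edge → Bool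

/-- `x` and `y` are joined by an open edge. -/
def openAdj (ω : Λ.Config) (x y : Fin d → ℤ) : Prop :=
  ∃ h : s(x, y) ∈ Λ.Efinset, ω ⟨s(x, y), h⟩ = true

/-- `x` and `y` are joined by an open path. -/
def Conn (ω : Λ.Config) : (Fin d → ℤ) → (Fin d → ℤ) → Prop :=
  Relation.ReflTransGen (Λ.openAdj ω)

/-- `x` is joined to the set `S` by an open path. -/
def connTo (ω : Λ.Config) (S : Set (Fin d → ℤ)) (x : Fin d → ℤ) : Prop :=
  ∃ v ∈ S, Λ.Conn ω v x

/-- The event `{T ↔ B}`: an open path joins `T` to `B`. -/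
def TconnB (ω : Λ.Config) : Prop :=
  ∃ x ∈ Λ.Tside, ∃ y ∈ Λ.Bside, Λ.Conn ω x y

/-- The open cluster of the vertex `x`. -/
def clusterSet (ω : Λ.Config) (x : Fin d → ℤ) : Set (Fin d → ℤ) := {y | Λ.Conn ω x y}

/-- Adjacency for the graph augmented by two ghost vertices implementing the `TB`
boundary condition: a ghost vertex wired to all of `T` and one wired to all of `B`. -/
def augAdj (ω : Λ.Config) : ((Fin d → ℤ) ⊕ Bool) → ((Fin d → ℤ) ⊕ Bool) → Prop
  | Sum.inl x, Sum.inl y => Λ.openAdj ω x y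
  | Sum.inl x, Sum.inr g => (g = true ∧ x ∈ Λ.Tside) ∨ (g = false ∧ x ∈ Λ.Bside)
  | Sum.inr g, Sum.inl x => (g = true ∧ x ∈ Λ.Tside) ∨ (g = false ∧ x ∈ Λ.Bside)
  | Sum.inr _, Sum.inr _ => False

/-- The cluster of a vertex in the augmented graph. -/
def augCluster (ω : Λ.Config) (v : (Fin d → ℤ) ⊕ Bool) : Set ((Fin d → ℤ) ⊕ Bool) :=
  {w | Relation.EqvGen (Λ.augAdj ω) v w}

/-- `k(ω, Λ)`: the number of open clusters meeting `Λ`, with `TB` boundary condition. -/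
def kCount (ω : Λ.Config) : ℕ :=
  Nat.card {S : Set ((Fin d → ℤ) ⊕ Bool) // ∃ x ∈ Λ.Vset, S = Λ.augCluster ω (Sum.inl x)}

/-- The FK (random-cluster) weight of a configuration. -/
def fkWeight (p q : ℝ) (ω : Λ.Config) : ℝ :=
  (∏ e : Λ.Edge, if ω e then p else 1 - p) * q ^ Λ.kCount ω

/-- The FK partition function. -/
def fkZ (p q : ℝ) : ℝ := ∑ ω : Λ.Config, Λ.fkWeight p q ω

/-- The FK measure `Φ^{TB}_{Λ,p,q}` of an event `A`. -/
def fkProb (p q : ℝ) (A : Set Λ.Config) : ℝ :=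
  (∑ ω : Λ.Config, Set.indicator A (Λ.fkWeight p q) ω) / Λ.fkZ p q

/-- The configuration `ω` with the state of the edge `e` set to `b`. -/
def upd (ω : Λ.Config) (e : Λ.Edge) (b : Bool) : Λ.Config := Function.update ω e b

/-- `e` is pivotal: `T` and `B` are disconnected but opening `e` connects them. -/
def pivotal (ω : Λ.Config) (e : Λ.Edge) : Prop :=
  ¬ Λ.TconnB ω ∧ Λ.TconnB (Λ.upd ω e true)

/-- The set `𝒫` of pivotal edges of a configuration. -/
def pivSet (ω : Λ.Config) : Set Λ.Edge := {e | Λ.pivotal ω e}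

/-- `x` and `y` are joined by an edge of the box avoiding the edge set `S`. -/
def avoidAdj (S : Set Λ.Edge) (x y : Fin d → ℤ) : Prop :=
  ∃ h : s(x, y) ∈ Λ.Efinset, (⟨s(x, y), h⟩ : Λ.Edge) ∉ S

/-- The edge set `S` separates `T` and `B` in the box. -/
def separates (S : Set Λ.Edge) : Prop :=
  ¬ ∃ x ∈ Λ.Tside, ∃ y ∈ Λ.Bside, Relation.ReflTransGen (Λ.avoidAdj S) x y

/-- A cut: an edge set separating `T` and `B`, minimal for inclusion. -/
def isCut (S : Set Λ.Edge) : Prop :=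
  Λ.separates S ∧ ∀ S' ⊂ S, ¬ Λ.separates S'

/-- A cut of the configuration `ω`: a cut all of whose edges are closed in `ω`. -/
def isConfigCut (ω : Λ.Config) (S : Set Λ.Edge) : Prop :=
  (∀ e ∈ S, ω e = false) ∧ Λ.isCut S

/-- The edge set `S` separates the vertex set `A` from the vertex set `S'` in the box. -/
def separatesFrom (S : Set Λ.Edge) (A T' : Set (Fin d → ℤ)) : Prop :=
  ¬ ∃ a ∈ A, ∃ t ∈ T', Relation.ReflTransGen (Λ.avoidAdj S) a t

/-- The region of `ℝ^d` occupied by a set of edges of the box. -/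
def edgeSetRegion (S : Set Λ.Edge) : Set (EuclideanSpace ℝ (Fin d)) :=
  ⋃ e ∈ S, edgeRegion d (e : Λ.Edge).1

/-- The event that the semi-distance `d_H^ℓ(A, B)` is at least `m`. -/
def dHge (ℓ : ℝ) (A B : Set (EuclideanSpace ℝ (Fin d))) (m : ℝ) : Prop :=
  ∀ r : ℝ, 0 ≤ r →
    (A \ nbhd d Λ.regionᶜ ℓ ⊆ nbhd d B r ∧ B \ nbhd d Λ.regionᶜ ℓ ⊆ nbhd d A r) → m ≤ r

/-- The probability `Φ(ω_e) / (Φ(ω^e) + Φ(ω_e))` that the Gibbs sampler closes `e`. -/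
def closeThreshold (p q : ℝ) (ω : Λ.Config) (e : Λ.Edge) : ℝ :=
  Λ.fkWeight p q (Λ.upd ω e false) /
    (Λ.fkWeight p q (Λ.upd ω e true) + Λ.fkWeight p q (Λ.upd ω e false))

/-- Transition kernel of the constrained Gibbs sampler `(Y_t)`, which refuses to open an
edge when this would connect `T` to `B`. -/
def kerY (p q : ℝ) (ω ω' : Λ.Config) : ℝ :=
  ((Λ.Efinset.card : ℝ))⁻¹ * ∑ e : Λ.Edge,
    (if Λ.TconnB (Λ.upd ω e true) then (if ω' = Λ.upd ω e false then 1 else 0)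
     else (if ω' = Λ.upd ω e true then 1 - Λ.closeThreshold p q ω e else 0) +
          (if ω' = Λ.upd ω e false then Λ.closeThreshold p q ω e else 0))

/-- `s`-step transition probabilities of the constrained Gibbs sampler. -/
def kerYpow (p q : ℝ) : ℕ → Λ.Config → Λ.Config → ℝ
  | 0, ω, ω' => if ω = ω' then 1 else 0
  | n + 1, ω, ω' => ∑ z : Λ.Config, Λ.kerY p q ω z * kerYpow p q n z ω'

/-- Transition kernel of the coupled Gibbs sampler `(X_t, Y_t)`: both chains use the same
uniform edge `E_t` and the same uniform variable `U_t`; `X` is unconstrained while `Y`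
refuses openings that would connect `T` to `B`. -/
def kerXY (p q : ℝ) (st st' : Λ.Config × Λ.Config) : ℝ :=
  ((Λ.Efinset.card : ℝ))⁻¹ * ∑ e : Λ.Edge,
    (let a := Λ.closeThreshold p q st.1 e
     let b := Λ.closeThreshold p q st.2 e
     let yo : Λ.Config :=
       if Λ.TconnB (Λ.upd st.2 e true) then Λ.upd st.2 e false else Λ.upd st.2 e true
     (if st' = (Λ.upd st.1 e true, yo) then 1 - max a b else 0) +
     (if st' = (Λ.upd st.1 e true, Λ.upd st.2 e false) then max 0 (b - a) else 0) +
     (if st' = (Λ.upd st.1 e false, yo) then max 0 (a - b) else 0) +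
     (if st' = (Λ.upd st.1 e false, Λ.upd st.2 e false) then min a b else 0))

/-- The state space `𝓔` of the coupled process: `Y` disconnects `T` from `B` and
`X` dominates `Y`. -/
def goodState (st : Λ.Config × Λ.Config) : Prop :=
  (¬ Λ.TconnB st.2) ∧ ∀ e, st.2 e = true → st.1 e = true

/-- `μ` is the (unique) equilibrium distribution `μ_{Λ,p,q}` of the coupled Gibbs
sampler: a probability measure carried by `𝓔` and stationary for the coupled kernel. -/
def IsCoupling (p q : ℝ) (μ : Λ.Config × Λ.Config → ℝ) : Prop :=
  (∀ st, 0 ≤ μ st) ∧ (∑ st : Λ.Config × Λ.Config, μ st = 1) ∧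
  (∀ st, μ st ≠ 0 → Λ.goodState st) ∧
  (∀ st', ∑ st : Λ.Config × Λ.Config, μ st * Λ.kerXY p q st st' = μ st')

/-- Probability of a one-time event under a distribution `μ` on pairs. -/
def prob (μ : Λ.Config × Λ.Config → ℝ) (A : Set (Λ.Config × Λ.Config)) : ℝ :=
  ∑ st : Λ.Config × Λ.Config, Set.indicator A μ st

/-- Probability of a trajectory of the stationary coupled chain `(X_t, Y_t)_{0 ≤ t ≤ N}`. -/
def pathProb (p q : ℝ) (μ : Λ.Config × Λ.Config → ℝ) (N : ℕ)
    (γ : Fin (N + 1) → Λ.Config × Λ.Config) : ℝ :=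
  μ (γ 0) * ∏ i : Fin N, Λ.kerXY p q (γ i.castSucc) (γ i.succ)

/-- The law `P_μ` of the stationary coupled chain, on trajectories of length `N`. -/
def pathMeasure (p q : ℝ) (μ : Λ.Config × Λ.Config → ℝ) (N : ℕ)
    (A : Set (Fin (N + 1) → Λ.Config × Λ.Config)) : ℝ :=
  ∑ γ : Fin (N + 1) → Λ.Config × Λ.Config, Set.indicator A (Λ.pathProb p q μ N) γ

/-- The FK measure conditioned on `{T ⇸ B}`, i.e. `Φ^𝒟 = Φ^{TB}(· | T ⇸ B)`. -/
def fkCondD (p q : ℝ) (ω : Λ.Config) : ℝ :=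
  (if Λ.TconnB ω then 0 else Λ.fkWeight p q ω) /
    ∑ ω' : Λ.Config, (if Λ.TconnB ω' then 0 else Λ.fkWeight p q ω')

/-- A spin configuration on the vertices of the box (`true` codes `+1`). -/
abbrev SpinCfg : Type := {x : Fin d → ℤ // x ∈ Λ.Vfinset} → Bool

end Box

/-- The spin value of a Boolean spin. -/
def spinVal (b : Bool) : ℝ := if b then 1 else -1

namespace Box

variable {d : ℕ} (Λ : Box d)

/-- `x` and `y` are adjacent vertices of the box both carrying the spin `b`. -/
def signAdj (σ : Λ.SpinCfg) (b : Bool) (x y : Fin d → ℤ) : Prop :=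
  latticeAdj d x y ∧ ∃ hx : x ∈ Λ.Vfinset, ∃ hy : y ∈ Λ.Vfinset,
    σ ⟨x, hx⟩ = b ∧ σ ⟨y, hy⟩ = b

/-- `x` is joined to the set `S` by a path of vertices carrying the spin `b`. -/
def signConnTo (σ : Λ.SpinCfg) (b : Bool) (x : Fin d → ℤ) (S : Set (Fin d → ℤ)) : Prop :=
  ∃ t ∈ S, Relation.ReflTransGen (Λ.signAdj σ b) x t

/-- The set `𝒫_I`: edges `⟨x,y⟩` with `σ^D(x) = +1`, `x` joined to `T` by a `+` path,
`σ^D(y) = -1` and `y` joined to `B` by a `-` path. -/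
def PIset (σD : Λ.SpinCfg) : Set Λ.Edge :=
  {e | ∃ x y, ∃ hx : x ∈ Λ.Vfinset, ∃ hy : y ∈ Λ.Vfinset, (e : Λ.Edge).1 = s(x, y) ∧
    σD ⟨x, hx⟩ = true ∧ Λ.signConnTo σD true x Λ.Tside ∧
    σD ⟨y, hy⟩ = false ∧ Λ.signConnTo σD false y Λ.Bside}

/-- The interface `ℐ_I`: edges whose endpoints agree in `σ^+` and in `σ^-` but
disagree in `σ^D`. -/
def IIset (σP σM σD : Λ.SpinCfg) : Set Λ.Edge :=
  {e | ∃ x y, ∃ hx : x ∈ Λ.Vfinset, ∃ hy : y ∈ Λ.Vfinset, (e : Λ.Edge).1 = s(x, y) ∧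
    σP ⟨x, hx⟩ = σP ⟨y, hy⟩ ∧ σM ⟨x, hx⟩ = σM ⟨y, hy⟩ ∧ σD ⟨x, hx⟩ ≠ σD ⟨y, hy⟩}

/-- A cut in the spin configuration `σ^D`: a set of edges `⟨x,y⟩` separating `T` and `B`
with `σ^D(x) ≠ σ^D(y)`. -/
def spinCut (σD : Λ.SpinCfg) (S : Set Λ.Edge) : Prop :=
  Λ.separates S ∧ ∀ e ∈ S, ∃ x y, ∃ hx : x ∈ Λ.Vfinset, ∃ hy : y ∈ Λ.Vfinset,
    (e : Λ.Edge).1 = s(x, y) ∧ σD ⟨x, hx⟩ ≠ σD ⟨y, hy⟩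

/-- Validity of the Dobrushin colouring `σ^D` of the clusters of `ω'`. -/
def validD (ω' : Λ.Config) (σD : Λ.SpinCfg) : Prop :=
  (∀ x y (hx : x ∈ Λ.Vfinset) (hy : y ∈ Λ.Vfinset),
      Λ.Conn ω' x y → σD ⟨x, hx⟩ = σD ⟨y, hy⟩) ∧
  (∀ x (hx : x ∈ Λ.Vfinset), Λ.connTo ω' Λ.Tside x → σD ⟨x, hx⟩ = true) ∧
  (∀ x (hx : x ∈ Λ.Vfinset), Λ.connTo ω' Λ.Bside x → σD ⟨x, hx⟩ = false)

/-- The number of clusters of `ω'` joined neither to `T` nor to `B`, each of which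
receives an independent uniform spin in `σ^D`. -/
def freeDCount (ω' : Λ.Config) : ℕ :=
  Nat.card {S : Set (Fin d → ℤ) //
    ∃ x ∈ Λ.Vset, ¬ Λ.connTo ω' (Λ.Tside ∪ Λ.Bside) x ∧ S = Λ.clusterSet ω' x}

/-- Validity of the colourings `σ^+`, `σ^-` of the clusters of `ω`, given `σ^D`. -/
def validPM (ω ω' : Λ.Config) (σD σP σM : Λ.SpinCfg) : Prop :=
  (∀ x y (hx : x ∈ Λ.Vfinset) (hy : y ∈ Λ.Vfinset), Λ.Conn ω x y →
      σP ⟨x, hx⟩ = σP ⟨y, hy⟩ ∧ σM ⟨x, hx⟩ = σM ⟨y, hy⟩) ∧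
  (∀ x (hx : x ∈ Λ.Vfinset), Λ.connTo ω Λ.bdry x →
      σP ⟨x, hx⟩ = true ∧ σM ⟨x, hx⟩ = false) ∧
  (∀ x (hx : x ∈ Λ.Vfinset), ¬ Λ.connTo ω Λ.bdry x → σP ⟨x, hx⟩ = σM ⟨x, hx⟩) ∧
  (∀ x (hx : x ∈ Λ.Vfinset), ¬ Λ.connTo ω Λ.bdry x →
      Λ.clusterSet ω x = Λ.clusterSet ω' x → σP ⟨x, hx⟩ = σD ⟨x, hx⟩)

/-- The number of clusters of `ω` not touching `∂Λ` which are unions of several clusters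
of `ω'`, each of which receives an independent uniform spin `N(C)` in `σ^±`. -/
def freePMCount (ω ω' : Λ.Config) : ℕ :=
  Nat.card {S : Set (Fin d → ℤ) //
    ∃ x ∈ Λ.Vset, ¬ Λ.connTo ω Λ.bdry x ∧ Λ.clusterSet ω x ≠ Λ.clusterSet ω' x ∧
      S = Λ.clusterSet ω x}

/-- The conditional probability of obtaining the spins `(σ^+, σ^-, σ^D)` from the
coupled configurations `(ω, ω')` in the Edwards–Sokal colouring. -/
def colorProb (ω ω' : Λ.Config) (tr : Λ.SpinCfg × Λ.SpinCfg × Λ.SpinCfg) : ℝ :=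
  (if Λ.validD ω' tr.2.2 ∧ Λ.validPM ω ω' tr.2.2 tr.1 tr.2.1 then 1 else 0) *
    (1 / 2) ^ (Λ.freeDCount ω' + Λ.freePMCount ω ω')

/-- The law `π_{Λ,β}` of the triple `(σ^+, σ^-, σ^D)` built from `(ω, ω') ∼ μ`. -/
def isingCoupling (μ : Λ.Config × Λ.Config → ℝ)
    (tr : Λ.SpinCfg × Λ.SpinCfg × Λ.SpinCfg) : ℝ :=
  ∑ st : Λ.Config × Λ.Config, μ st * Λ.colorProb st.1 st.2 tr

/-- Probability of an event under `π_{Λ,β}`. -/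
def piProb (μ : Λ.Config × Λ.Config → ℝ)
    (A : Set (Λ.SpinCfg × Λ.SpinCfg × Λ.SpinCfg)) : ℝ :=
  ∑ tr : Λ.SpinCfg × Λ.SpinCfg × Λ.SpinCfg, Set.indicator A (Λ.isingCoupling μ) tr

/-- The field acting on `x ∈ Λ` created by the exterior spins `ξ`. -/
def extField (ξ : (Fin d → ℤ) → ℝ) (x : Fin d → ℤ) : ℝ :=
  ∑ i : Fin d,
    ((if (x + unitZ d i) ∈ Λ.Vset then 0 else ξ (x + unitZ d i)) +
     (if (x - unitZ d i) ∈ Λ.Vset then 0 else ξ (x - unitZ d i)))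

/-- The interaction energy `Σ_{⟨x,y⟩ ∈ E} σ(x)σ(y)` of a spin configuration. -/
def pairEnergy (σ : Λ.SpinCfg) : ℝ :=
  (1 / 2) * ∑ x : {v : Fin d → ℤ // v ∈ Λ.Vfinset}, ∑ y : {v : Fin d → ℤ // v ∈ Λ.Vfinset},
    if latticeAdj d x.1 y.1 then spinVal (σ x) * spinVal (σ y) else 0

/-- The Boltzmann weight of a spin configuration with exterior spins `ξ`. -/
def isingWeight (β : ℝ) (ξ : (Fin d → ℤ) → ℝ) (σ : Λ.SpinCfg) : ℝ :=
  Real.exp (β * (Λ.pairEnergy σ +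
    ∑ x : {v : Fin d → ℤ // v ∈ Λ.Vfinset}, Λ.extField ξ x.1 * spinVal (σ x)))

/-- The Ising Gibbs measure at inverse temperature `β` with exterior spins `ξ`. -/
def isingProbFun (β : ℝ) (ξ : (Fin d → ℤ) → ℝ) (σ : Λ.SpinCfg) : ℝ :=
  Λ.isingWeight β ξ σ / ∑ σ' : Λ.SpinCfg, Λ.isingWeight β ξ σ'

/-- The exterior spins realising the Dobrushin boundary condition: `+1` in the upper
half space, `-1` in the lower one. -/
def dobrushinExt (z : Fin d → ℤ) : ℝ :=
  if 0 ≤ Λ.rot.symm (toE d z) Λ.axis then 1 else -1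

/-- The open cluster `O(T)` of the side `T`. -/
def OT (ω : Λ.Config) : Set (Fin d → ℤ) :=
  {x | x ∈ Λ.Vset ∧ Λ.connTo ω Λ.Tside x}

/-- The set `C^+`: edges with exactly one endpoint in `O(T)` which are reachable from `B`
by a lattice path avoiding `O(T)`. -/
def Cplus (ω : Λ.Config) : Set Λ.Edge :=
  {e | (∃ x y, (e : Λ.Edge).1 = s(x, y) ∧ x ∈ Λ.OT ω ∧ y ∉ Λ.OT ω) ∧
    ∃ b ∈ Λ.Bside, ∃ v, v ∈ (e : Λ.Edge).1 ∧ v ∉ Λ.OT ω ∧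
      Relation.ReflTransGen
        (fun u w => latticeAdj d u w ∧ u ∉ Λ.OT ω ∧ w ∉ Λ.OT ω) b v}

/-- The outer edge boundary `∂_e C` of a set of vertices `C`: closed edges with exactly
one endpoint in `C`. -/
def outerEdgeBdry (ω : Λ.Config) (C : Set (Fin d → ℤ)) : Set Λ.Edge :=
  {e | ω e = false ∧ ∃ x y, (e : Λ.Edge).1 = s(x, y) ∧ x ∈ C ∧ y ∉ C}

/-- The event `Γ(e, n, side)`: there is a closed `*`-path of length `n` starting from `e`
and a cut separating this path from `side`. -/
def GammaEvent (e : Λ.Edge) (n : ℕ) (side : Set (Fin d → ℤ)) : Set Λ.Config :=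
  {ω | ∃ γ : Fin n → Λ.Edge,
    (∃ i : Fin n, (i : ℕ) = 0 ∧ γ i = e) ∧
    (∀ i j : Fin n, (j : ℕ) = (i : ℕ) + 1 → starAdj d (γ i).1 (γ j).1) ∧
    (∀ i, ω (γ i) = false) ∧
    ∃ S : Set Λ.Edge, Λ.isCut S ∧
      Λ.separatesFrom S {v | ∃ i, v ∈ (γ i).1} side}

end Box

end IsingInterface

namespace IsingInterface

section Aux

variable {d : ℕ} {Λ : Box d}

private lemma avoidAdj_symm {S : Set Λ.Edge} {x y : Fin d → ℤ}
    (h : Λ.avoidAdj S x y) : Λ.avoidAdj S y x := by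
  unfold Box.avoidAdj at h ⊢
  rw [Sym2.eq_swap]
  exact h

private lemma openAdj_symm {ω : Λ.Config} {x y : Fin d → ℤ}
    (h : Λ.openAdj ω x y) : Λ.openAdj ω y x := by
  unfold Box.openAdj at h ⊢
  rw [Sym2.eq_swap]
  exact h

private lemma avoid_symm {S : Set Λ.Edge} {x y : Fin d → ℤ}
    (h : Relation.ReflTransGen (Λ.avoidAdj S) x y) :
    Relation.ReflTransGen (Λ.avoidAdj S) y x :=
  (@Relation.ReflTransGen.stdSymm _ (Λ.avoidAdj S) ⟨fun _ _ hh => avoidAdj_symm hh⟩).symm _ _ h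

private lemma conn_symm {ω : Λ.Config} {x y : Fin d → ℤ} (h : Λ.Conn ω x y) :
    Λ.Conn ω y x :=
  (@Relation.ReflTransGen.stdSymm _ (Λ.openAdj ω) ⟨fun _ _ hh => openAdj_symm hh⟩).symm _ _ h

/-- Extraction of a minimal separating subset. -/
private lemma exists_cut_subset {S : Set Λ.Edge} (hS : Λ.separates S) :
    ∃ S' : Set Λ.Edge, S' ⊆ S ∧ Λ.isCut S' := by
  classical
  have hne : ∃ n : ℕ, ∃ T : Set Λ.Edge, T ⊆ S ∧ Λ.separates T ∧ T.ncard = n :=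
    ⟨S.ncard, S, subset_rfl, hS, rfl⟩
  obtain ⟨T, hTS, hTsep, hTcard⟩ := Nat.find_spec hne
  refine ⟨T, hTS, hTsep, ?_⟩
  intro S' hS' hS'sep
  have hfin : T.Finite := Set.toFinite T
  have hlt : S'.ncard < T.ncard := Set.ncard_lt_ncard hS' hfin
  rw [hTcard] at hlt
  exact Nat.find_min hne hlt ⟨S', hS'.subset.trans hTS, hS'sep, rfl⟩

/-- The set of closed edges separates `T` and `B` when `T ⇸ B`. -/
private lemma closed_separates {ω : Λ.Config} (hω : ¬ Λ.TconnB ω) :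
    Λ.separates {e : Λ.Edge | ω e = false} := by
  rintro ⟨t, ht, b, hb, hpath⟩
  refine hω ⟨t, ht, b, hb, ?_⟩
  refine Relation.ReflTransGen.mono ?_ _ _ hpath
  rintro x y ⟨he, hne⟩
  exact ⟨he, by simpa using hne⟩

/-- Splitting a path avoiding `S \ {e}` at the edge `e`. -/
private lemma split_path {S : Set Λ.Edge} (e : Λ.Edge) {a b : Fin d → ℤ}
    (h : Relation.ReflTransGen (Λ.avoidAdj (S \ {e})) a b) :
    Relation.ReflTransGen (Λ.avoidAdj S) a b ∨
      ∃ u w : Fin d → ℤ, e.1 = s(u, w) ∧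
        Relation.ReflTransGen (Λ.avoidAdj S) a u ∧
        Relation.ReflTransGen (Λ.avoidAdj S) w b := by
  induction h with
  | refl => exact Or.inl Relation.ReflTransGen.refl
  | @tail m c hum hmc ih =>
    obtain ⟨hmem, hns⟩ := hmc
    by_cases hS : (⟨s(m, c), hmem⟩ : Λ.Edge) ∈ S
    · have he : e = ⟨s(m, c), hmem⟩ := by
        by_contra hne
        exact hns ⟨hS, fun hh => hne (by simpa using hh.symm)⟩
      have he1 : e.1 = s(m, c) := by rw [he]
      rcases ih with hpath | ⟨u, w, heq, h1, h2⟩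
      · exact Or.inr ⟨m, c, he1, hpath, Relation.ReflTransGen.refl⟩
      · have huw : s(u, w) = s(m, c) := by rw [← heq, he1]
        rcases Sym2.eq_iff.mp huw with ⟨hum', hwc⟩ | ⟨huc, hwm⟩
        · subst hum'; subst hwc
          exact Or.inr ⟨u, w, heq, h1, Relation.ReflTransGen.refl⟩
        · subst huc; subst hwm
          exact Or.inl h1
    · have step : Λ.avoidAdj S m c := ⟨hmem, hS⟩
      rcases ih with hpath | ⟨u, w, heq, h1, h2⟩
      · exact Or.inl (hpath.tail step)
      · exact Or.inr ⟨u, w, heq, h1, h2.tail step⟩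

/-- Every edge of a cut has one endpoint joined to `T` and the other to `B`,
avoiding the cut. -/
private lemma cut_edge_split {S : Set Λ.Edge} (hcut : Λ.isCut S) {e : Λ.Edge}
    (he : e ∈ S) :
    ∃ u w : Fin d → ℤ, e.1 = s(u, w) ∧
      (∃ t ∈ Λ.Tside, Relation.ReflTransGen (Λ.avoidAdj S) t u) ∧
      (∃ b ∈ Λ.Bside, Relation.ReflTransGen (Λ.avoidAdj S) w b) := by
  have hss : S \ {e} ⊂ S := Set.sdiff_singleton_ssubset.mpr he
  have hnsep := hcut.2 _ hss
  rw [Box.separates, not_not] at hnsep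
  obtain ⟨t, ht, b, hb, hpath⟩ := hnsep
  rcases split_path e hpath with hgood | ⟨u, w, heq, h1, h2⟩
  · exact absurd ⟨t, ht, b, hb, hgood⟩ hcut.1
  · exact ⟨u, w, heq, ⟨t, ht, h1⟩, ⟨b, hb, h2⟩⟩

/-- The key induction: along a path avoiding `S Δ ∂ₑC` starting from `X`, either the
current vertex is outside `C` and joined to `X` avoiding `S`, or some vertex of `C`
is joined to `Y` avoiding `S`. -/
private lemma theta_helper {S S₂ : Set Λ.Edge} {ω : Λ.Config} {C : Set (Fin d → ℤ)}
    {X Y : Set (Fin d → ℤ)}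
    (hC : ∀ x y : Fin d → ℤ, Λ.openAdj ω x y → x ∈ C → y ∈ C)
    (h1 : ∀ e : Λ.Edge, e ∈ S → e ∉ Λ.outerEdgeBdry ω C → e ∈ S₂)
    (h2 : ∀ e : Λ.Edge, e ∈ Λ.outerEdgeBdry ω C → e ∉ S → e ∈ S₂)
    (hXC : ∀ x ∈ X, x ∉ C)
    (hsep : ∀ z : Fin d → ℤ, (∃ x ∈ X, Relation.ReflTransGen (Λ.avoidAdj S) x z) →
      (∃ y ∈ Y, Relation.ReflTransGen (Λ.avoidAdj S) z y) → False)
    (hF2 : ∀ (m b : Fin d → ℤ) (hmem : s(m, b) ∈ Λ.Efinset),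
      (⟨s(m, b), hmem⟩ : Λ.Edge) ∈ S →
      ((∃ x ∈ X, Relation.ReflTransGen (Λ.avoidAdj S) x m) ∧
        (∃ y ∈ Y, Relation.ReflTransGen (Λ.avoidAdj S) b y)) ∨
      ((∃ x ∈ X, Relation.ReflTransGen (Λ.avoidAdj S) x b) ∧
        (∃ y ∈ Y, Relation.ReflTransGen (Λ.avoidAdj S) m y)))
    {u w : Fin d → ℤ} (hpath : Relation.ReflTransGen (Λ.avoidAdj S₂) u w)
    (hu : u ∈ X) (hw : w ∈ Y) :
    ∃ c ∈ C, ∃ y ∈ Y, Relation.ReflTransGen (Λ.avoidAdj S) c y := by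
  have key : ∀ z : Fin d → ℤ, Relation.ReflTransGen (Λ.avoidAdj S₂) u z →
      (z ∉ C ∧ ∃ x ∈ X, Relation.ReflTransGen (Λ.avoidAdj S) x z) ∨
      (∃ c ∈ C, ∃ y ∈ Y, Relation.ReflTransGen (Λ.avoidAdj S) c y) := by
    intro z hz
    induction hz with
    | refl => exact Or.inl ⟨hXC u hu, u, hu, Relation.ReflTransGen.refl⟩
    | @tail m b hum hmb ih =>
      rcases ih with ⟨hmC, hRXm⟩ | cert
      · obtain ⟨hmem, hnot⟩ := hmb
        by_cases hbC : b ∈ C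
        · have hclosed : ω ⟨s(m, b), hmem⟩ = false := by
            cases hval : ω ⟨s(m, b), hmem⟩ with
            | false => rfl
            | true => exact absurd (hC b m (openAdj_symm ⟨hmem, hval⟩) hbC) hmC
          have hbd : (⟨s(m, b), hmem⟩ : Λ.Edge) ∈ Λ.outerEdgeBdry ω C :=
            ⟨hclosed, b, m, Sym2.eq_swap, hbC, hmC⟩
          have hSmem : (⟨s(m, b), hmem⟩ : Λ.Edge) ∈ S := by
            by_contra h'
            exact hnot (h2 _ hbd h')
          rcases hF2 m b hmem hSmem with ⟨_, hRYb⟩ | ⟨_, hRYm⟩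
          · exact Or.inr ⟨b, hbC, hRYb⟩
          · exact absurd hRYm (fun hh => hsep m hRXm hh)
        · have hnS : (⟨s(m, b), hmem⟩ : Λ.Edge) ∉ S := by
            intro h'
            refine hnot (h1 _ h' ?_)
            rintro ⟨-, x', y', heq, hx'C, hy'C⟩
            rcases Sym2.eq_iff.mp heq with ⟨hmx, hby⟩ | ⟨hmy, hbx⟩
            · exact hmC (hmx ▸ hx'C)
            · exact hbC (hbx ▸ hx'C)
          obtain ⟨x, hx, pxm⟩ := hRXm
          exact Or.inl ⟨hbC, x, hx, pxm.tail ⟨hmem, hnS⟩⟩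
      · exact Or.inr cert
  rcases key w hpath with ⟨_, hRXw⟩ | cert
  · exact absurd (hsep w hRXw ⟨w, hw, Relation.ReflTransGen.refl⟩) (fun h => h)
  · exact cert

end Aux

/-- **Lemma (half of the outer boundary of a cluster avoids a cut).**
Let `ω ∈ {T ⇸ B}` and let `C` be an open cluster of `ω` not touching `∂Λ` whose outer
edge boundary `∂_e C` contains no pivotal edge, and suppose that every cut of the
configuration intersects `∂_e C`.  Then there is a subset `A ⊆ ∂_e C` with
`|A| ≥ |∂_e C| / 2` and a cut disjoint from `A`. -/
theorem half_outer_boundary_avoids_cut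
    (d : ℕ) (hd : 2 ≤ d) (Λ : Box d) (ω : Λ.Config) (hω : ¬ Λ.TconnB ω)
    (x0 : Fin d → ℤ) (hx0 : x0 ∈ Λ.Vset)
    (hint : ∀ v ∈ Λ.clusterSet ω x0, v ∉ Λ.bdry)
    (hnopiv : ∀ e ∈ Λ.outerEdgeBdry ω (Λ.clusterSet ω x0), ¬ Λ.pivotal ω e)
    (hmeet : ∀ S : Set Λ.Edge, Λ.isConfigCut ω S →
      ∃ e, e ∈ S ∧ e ∈ Λ.outerEdgeBdry ω (Λ.clusterSet ω x0)) :
    ∃ A : Set Λ.Edge, A ⊆ Λ.outerEdgeBdry ω (Λ.clusterSet ω x0) ∧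
      (Λ.outerEdgeBdry ω (Λ.clusterSet ω x0)).ncard ≤ 2 * A.ncard ∧
      ∃ S : Set Λ.Edge, Λ.isConfigCut ω S ∧ Disjoint S A := by
  classical
  set C : Set (Fin d → ℤ) := Λ.clusterSet ω x0 with hCdef
  set Bd : Set Λ.Edge := Λ.outerEdgeBdry ω C with hBddef
  -- the open cluster is closed under open edges
  have hC : ∀ x y : Fin d → ℤ, Λ.openAdj ω x y → x ∈ C → y ∈ C := by
    intro x y hxy hx
    exact Relation.ReflTransGen.tail hx hxy
  -- any two points of the cluster are joined avoiding any set of closed edges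
  have hCconn : ∀ S : Set Λ.Edge, (∀ e ∈ S, ω e = false) → ∀ c ∈ C, ∀ c' ∈ C,
      Relation.ReflTransGen (Λ.avoidAdj S) c c' := by
    intro S hS c hc c' hc'
    have hcc : Λ.Conn ω c c' := (conn_symm hc).trans hc'
    refine Relation.ReflTransGen.mono ?_ _ _ hcc
    rintro x y ⟨he, hval⟩
    refine ⟨he, fun hmem => ?_⟩
    rw [hS _ hmem] at hval
    simp at hval
  -- main separation statement: flipping the cut across the cluster still separates
  have hsepmain : ∀ S : Set Λ.Edge, Λ.isConfigCut ω S →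
      Λ.separates ((S \ Bd) ∪ (Bd \ S)) := by
    intro S hS
    obtain ⟨hclosed, hcut⟩ := hS
    rintro ⟨t, ht, b, hb, hpath⟩
    have hsepTB : ∀ z : Fin d → ℤ,
        (∃ x ∈ Λ.Tside, Relation.ReflTransGen (Λ.avoidAdj S) x z) →
        (∃ y ∈ Λ.Bside, Relation.ReflTransGen (Λ.avoidAdj S) z y) → False := by
      rintro z ⟨x, hx, p1⟩ ⟨y, hy, p2⟩
      exact hcut.1 ⟨x, hx, y, hy, p1.trans p2⟩
    have hsepBT : ∀ z : Fin d → ℤ,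
        (∃ x ∈ Λ.Bside, Relation.ReflTransGen (Λ.avoidAdj S) x z) →
        (∃ y ∈ Λ.Tside, Relation.ReflTransGen (Λ.avoidAdj S) z y) → False := by
      rintro z ⟨x, hx, p1⟩ ⟨y, hy, p2⟩
      exact hcut.1 ⟨y, hy, x, hx, (avoid_symm p2).trans (avoid_symm p1)⟩
    have hF2TB : ∀ (m b' : Fin d → ℤ) (hmem : s(m, b') ∈ Λ.Efinset),
        (⟨s(m, b'), hmem⟩ : Λ.Edge) ∈ S →
        ((∃ x ∈ Λ.Tside, Relation.ReflTransGen (Λ.avoidAdj S) x m) ∧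
          (∃ y ∈ Λ.Bside, Relation.ReflTransGen (Λ.avoidAdj S) b' y)) ∨
        ((∃ x ∈ Λ.Tside, Relation.ReflTransGen (Λ.avoidAdj S) x b') ∧
          (∃ y ∈ Λ.Bside, Relation.ReflTransGen (Λ.avoidAdj S) m y)) := by
      intro m b' hmem hmemS
      obtain ⟨u, w, heq, ⟨t', ht', ptu⟩, ⟨b'', hb'', pwb⟩⟩ := cut_edge_split hcut hmemS
      have heq' : s(m, b') = s(u, w) := heq
      rcases Sym2.eq_iff.mp heq' with ⟨hmu, hbw⟩ | ⟨hmw, hbu⟩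
      · subst hmu; subst hbw
        exact Or.inl ⟨⟨t', ht', ptu⟩, ⟨b'', hb'', pwb⟩⟩
      · subst hmw; subst hbu
        exact Or.inr ⟨⟨t', ht', ptu⟩, ⟨b'', hb'', pwb⟩⟩
    have hF2BT : ∀ (m b' : Fin d → ℤ) (hmem : s(m, b') ∈ Λ.Efinset),
        (⟨s(m, b'), hmem⟩ : Λ.Edge) ∈ S →
        ((∃ x ∈ Λ.Bside, Relation.ReflTransGen (Λ.avoidAdj S) x m) ∧
          (∃ y ∈ Λ.Tside, Relation.ReflTransGen (Λ.avoidAdj S) b' y)) ∨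
        ((∃ x ∈ Λ.Bside, Relation.ReflTransGen (Λ.avoidAdj S) x b') ∧
          (∃ y ∈ Λ.Tside, Relation.ReflTransGen (Λ.avoidAdj S) m y)) := by
      intro m b' hmem hmemS
      obtain ⟨u, w, heq, ⟨t', ht', ptu⟩, ⟨b'', hb'', pwb⟩⟩ := cut_edge_split hcut hmemS
      have heq' : s(m, b') = s(u, w) := heq
      rcases Sym2.eq_iff.mp heq' with ⟨hmu, hbw⟩ | ⟨hmw, hbu⟩
      · subst hmu; subst hbw
        exact Or.inr ⟨⟨b'', hb'', avoid_symm pwb⟩, ⟨t', ht', avoid_symm ptu⟩⟩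
      · subst hmw; subst hbu
        exact Or.inl ⟨⟨b'', hb'', avoid_symm pwb⟩, ⟨t', ht', avoid_symm ptu⟩⟩
    have h1 : ∀ e : Λ.Edge, e ∈ S → e ∉ Bd → e ∈ (S \ Bd) ∪ (Bd \ S) :=
      fun e he hn => Or.inl ⟨he, hn⟩
    have h2 : ∀ e : Λ.Edge, e ∈ Bd → e ∉ S → e ∈ (S \ Bd) ∪ (Bd \ S) :=
      fun e he hn => Or.inr ⟨he, hn⟩
    have hTC : ∀ x ∈ Λ.Tside, x ∉ C := fun x hx hxC => hint x hxC hx.1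
    have hBC : ∀ x ∈ Λ.Bside, x ∉ C := fun x hx hxC => hint x hxC hx.1
    obtain ⟨c1, hc1, b1, hb1, p1⟩ :=
      theta_helper hC h1 h2 hTC hsepTB hF2TB hpath ht hb
    obtain ⟨c2, hc2, t2, ht2, p2⟩ :=
      theta_helper hC h1 h2 hBC hsepBT hF2BT (avoid_symm hpath) hb ht
    exact hsepTB c1
      ⟨t2, ht2, (avoid_symm p2).trans (hCconn S hclosed c2 hc2 c1 hc1)⟩
      ⟨b1, hb1, p1⟩
  -- existence of an initial configuration cut
  obtain ⟨S0, hS0sub, hS0cut⟩ := exists_cut_subset (closed_separates hω)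
  have hS0conf : Λ.isConfigCut ω S0 := ⟨fun e he => hS0sub he, hS0cut⟩
  have hsplitcard : (Bd ∩ S0).ncard + (Bd \ S0).ncard = Bd.ncard :=
    Set.ncard_inter_add_ncard_diff_eq_ncard Bd S0 (Set.toFinite _)
  by_cases hle : (Bd ∩ S0).ncard ≤ (Bd \ S0).ncard
  · refine ⟨Bd \ S0, Set.diff_subset, by omega, S0, hS0conf, ?_⟩
    exact Set.disjoint_left.mpr fun e he hq => hq.2 he
  · refine ⟨Bd ∩ S0, Set.inter_subset_left, by omega, ?_⟩
    obtain ⟨S3, hsub3, hcut3⟩ := exists_cut_subset (hsepmain S0 hS0conf)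
    refine ⟨S3, ⟨fun e he => ?_, hcut3⟩, ?_⟩
    · rcases hsub3 he with ⟨heS0, _⟩ | ⟨heBd, _⟩
      · exact hS0conf.1 e heS0
      · exact heBd.1
    · refine Set.disjoint_left.mpr fun e he hP => ?_
      rcases hsub3 he with ⟨_, hnBd⟩ | ⟨_, hnS0⟩
      · exact hnBd hP.1
      · exact hnS0 hP.2

end IsingInterface
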